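/- Let C be a Cauchy sequence for an irrational α ∈ (0,1), and define D : ℤ × ℕ⁺ → {0,1} by D(p,q) = 0 if C(q) ≤ p/q and D(p,q) = 1 if C(q) > p/q. Then D is a fuzzy Dedekind cut for α: D(p,q) = 0 implies α < (p+1)/q, and D(p,q) = 1 implies (p−1)/q < α. -/
import Mathlib


/-- If `C` is a Cauchy sequence for an irrational `α ∈ (0,1)`, then
the function `D(p,q)` which is `0` if `C(q) ≤ p/q` and `1` if `C(q) > p/q` is a
fuzzy Dedekind cut for `α`: `D(p,q) = 0` implies `α < (p+1)/q`, and `D(p,q) = 1`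
implies `(p-1)/q < α`. -/
theorem cauchy_to_fuzzy (α : ℝ) (hirr : Irrational α) (h0 : 0 < α) (h1 : α < 1)
    (C : ℕ → ℚ) (hC : ∀ n : ℕ, 1 ≤ n → |(C n : ℝ) - α| < 1 / n) :
    ∀ (p : ℤ) (q : ℕ), 1 ≤ q →
      (C q ≤ (p : ℚ) / q → α < ((p : ℝ) + 1) / q) ∧
      ((p : ℚ) / q < C q → ((p : ℝ) - 1) / q < α) := by
  intro p q hq
  have hq0 : (0 : ℝ) < q := by exact_mod_cast hq
  have habs := abs_sub_lt_iff.mp (hC q hq)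
  constructor
  · intro h
    have h' : (C q : ℝ) ≤ (p : ℝ) / q := by exact_mod_cast h
    have : α < (p : ℝ) / q + 1 / q := by linarith [habs.2]
    calc α < (p : ℝ) / q + 1 / q := this
      _ = ((p : ℝ) + 1) / q := by ring
  · intro h
    have h' : (p : ℝ) / q < (C q : ℝ) := by exact_mod_cast h
    have : (p : ℝ) / q - 1 / q < α := by linarith [habs.1]
    calc ((p : ℝ) - 1) / q = (p : ℝ) / q - 1 / q := by ring
      _ < α := this
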